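/- Let n ≥ 2 be an integer, let x_1,…,x_n and a_1,…,a_n be complex numbers, let p > 1 and q be real numbers with 1/p + 1/q = 1, and let μ_1,…,μ_n be nonzero real numbers with μ_1 > 0 and μ_i < 0 for i = 2,…,n, and let λ > 0. If λ^{1/(p-1)} ≤ |μ_1|^{1/(p-1)}·|a_1|^q − Σ_{i=2}^n |μ_i|^{1/(p-1)}·|a_i|^q, then Σ_{i=1}^n |x_i|^p/μ_i ≤ |Σ_{i=1}^n a_i·x_i|^p / λ. -/

import Mathlib

open Finset in
/-- Generalized Hölder / Bohr type inequality with positive weights. -/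
lemma hoelder_aux {ι : Type*} (s : Finset ι) (z : ι → ℂ) (d : ι → ℝ)
    {p : ℝ} (hp : 1 < p) (hd : ∀ i ∈ s, 0 < d i) :
    ‖∑ i ∈ s, z i‖ ^ p ≤
      (∑ i ∈ s, d i ^ (1 / (p - 1))) ^ (p - 1) * ∑ i ∈ s, ‖z i‖ ^ p / d i := by
  have hp0 : 0 < p := lt_trans one_pos hp
  have hp1 : 0 < p - 1 := sub_pos.2 hp
  have hpq : Real.HolderConjugate p (p / (p - 1)) :=
    (Real.holderConjugate_iff_eq_conjExponent hp).2 rfl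
  set q : ℝ := p / (p - 1) with hqdef
  have hq0 : 0 < q := by positivity
  -- step 1 : triangle inequality
  have h1 : ‖∑ i ∈ s, z i‖ ≤ ∑ i ∈ s, ‖z i‖ :=
    norm_sum_le s z
  -- step 2 : Hölder
  set f : ι → ℝ := fun i => ‖z i‖ / d i ^ (1 / p) with hfdef
  set g : ι → ℝ := fun i => d i ^ (1 / p) with hgdef
  have h2 : ∑ i ∈ s, ‖z i‖ = ∑ i ∈ s, f i * g i := by
    refine Finset.sum_congr rfl fun i hi => ?_
    have : d i ^ (1 / p) ≠ 0 := by
      have := hd i hi; positivity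
    rw [hfdef, hgdef]
    field_simp
  have h3 : ∑ i ∈ s, f i * g i ≤
      (∑ i ∈ s, f i ^ p) ^ (1 / p) * (∑ i ∈ s, g i ^ q) ^ (1 / q) := by
    refine Real.inner_le_Lp_mul_Lq_of_nonneg s hpq ?_ ?_
    · intro i hi
      have := (hd i hi).le
      rw [hfdef]; positivity
    · intro i hi
      have := (hd i hi).le
      rw [hgdef]; positivity
  have hfp : ∑ i ∈ s, f i ^ p = ∑ i ∈ s, ‖z i‖ ^ p / d i := by
    refine Finset.sum_congr rfl fun i hi => ?_
    have hdi := hd i hi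
    rw [hfdef]
    rw [Real.div_rpow (norm_nonneg _) (by positivity),
      ← Real.rpow_mul hdi.le, one_div_mul_cancel hp0.ne', Real.rpow_one]
  have hgq : ∑ i ∈ s, g i ^ q = ∑ i ∈ s, d i ^ (1 / (p - 1)) := by
    refine Finset.sum_congr rfl fun i hi => ?_
    have hdi := hd i hi
    rw [hgdef]
    rw [← Real.rpow_mul hdi.le]
    congr 1
    rw [hqdef, div_mul_div_comm, one_mul, div_eq_div_iff (by positivity) (by positivity)]
    ring
  have h4 : ‖∑ i ∈ s, z i‖ ≤
      (∑ i ∈ s, ‖z i‖ ^ p / d i) ^ (1 / p) *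
        (∑ i ∈ s, d i ^ (1 / (p - 1))) ^ (1 / q) := by
    rw [← hfp, ← hgq]
    exact h1.trans (h2.le.trans h3)
  -- raise to the p-th power
  have hA : (0:ℝ) ≤ ∑ i ∈ s, ‖z i‖ ^ p / d i := by
    refine Finset.sum_nonneg fun i hi => ?_
    have := (hd i hi).le
    positivity
  have hB : (0:ℝ) ≤ ∑ i ∈ s, d i ^ (1 / (p - 1)) := by
    refine Finset.sum_nonneg fun i hi => ?_
    have := (hd i hi).le
    positivity
  calc ‖∑ i ∈ s, z i‖ ^ p
      ≤ ((∑ i ∈ s, ‖z i‖ ^ p / d i) ^ (1 / p) *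
          (∑ i ∈ s, d i ^ (1 / (p - 1))) ^ (1 / q)) ^ p :=
        Real.rpow_le_rpow (norm_nonneg _) h4 hp0.le
    _ = (∑ i ∈ s, d i ^ (1 / (p - 1))) ^ (p - 1) *
          ∑ i ∈ s, ‖z i‖ ^ p / d i := by
        rw [Real.mul_rpow (by positivity) (by positivity),
          ← Real.rpow_mul hA, ← Real.rpow_mul hB,
          one_div_mul_cancel hp0.ne', Real.rpow_one]
        rw [show (1 / q) * p = p - 1 by
          rw [hqdef, one_div_div, div_mul_cancel₀ _ hp0.ne']]
        ring

open Finset in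
/-- Theorem 2, Case (ii): n-term (n ≥ 2, here n + 2 indices) Bohr type inequality for
complex numbers with μ_1 > 0, μ_i < 0 for i ≥ 2 and λ > 0. -/
theorem bohr_type_complex_n_case_ii (n : ℕ) (x a : Fin (n + 2) → ℂ) (p q : ℝ)
    (hp : 1 < p) (hpq : 1 / p + 1 / q = 1) (μ : Fin (n + 2) → ℝ)
    (hμ1 : 0 < μ 0) (hμi : ∀ i, i ≠ 0 → μ i < 0) (lam : ℝ) (hlam : 0 < lam)
    (h : lam ^ (1 / (p - 1)) ≤ |μ 0| ^ (1 / (p - 1)) * ‖a 0‖ ^ q -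
      ∑ i ∈ univ.erase 0, |μ i| ^ (1 / (p - 1)) * ‖a i‖ ^ q) :
    ∑ i, ‖x i‖ ^ p / μ i ≤ ‖∑ i, a i * x i‖ ^ p / lam := by
  have hp0 : 0 < p := lt_trans one_pos hp
  have hp1 : 0 < p - 1 := sub_pos.2 hp
  -- q = p / (p - 1)
  have hq : q = p / (p - 1) := by
    have hq1 : 1 / q = (p - 1) / p := by
      have : (p - 1) / p = 1 - 1 / p := by field_simp
      rw [this]; linarith
    rw [← one_div_one_div q, hq1, one_div_div]
  have hq0 : 0 < q := by rw [hq]; positivity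
  have hqp : q * (p - 1) = p := by rw [hq]; field_simp
  -- a 0 ≠ 0
  have hsum_nonneg : (0:ℝ) ≤ ∑ i ∈ univ.erase 0,
      |μ i| ^ (1 / (p - 1)) * ‖a i‖ ^ q := by
    refine Finset.sum_nonneg fun i hi => ?_
    positivity
  have ha0 : a 0 ≠ 0 := by
    intro h0
    rw [h0] at h
    simp only [norm_zero, Real.zero_rpow hq0.ne', mul_zero, zero_sub] at h
    have : (0:ℝ) < lam ^ (1 / (p - 1)) := Real.rpow_pos_of_pos hlam _
    linarith
  have ha0' : (0:ℝ) < ‖a 0‖ := by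
    simpa [norm_pos_iff] using ha0
  set S : ℂ := ∑ i, a i * x i with hSdef
  set z : Fin (n + 2) → ℂ := fun i => if i = 0 then S else -(a i * x i) with hzdef
  set d : Fin (n + 2) → ℝ :=
    fun i => if i = 0 then lam else (-μ i) * ‖a i‖ ^ p with hddef
  set t : Finset (Fin (n + 2)) := univ.filter (fun i => i = 0 ∨ a i ≠ 0) with htdef
  have h0t : (0 : Fin (n + 2)) ∈ t := by simp [htdef]
  have hmemt : ∀ i ∈ t, i ≠ 0 → a i ≠ 0 := by
    intro i hi hne
    rcases (Finset.mem_filter.1 hi).2 with h' | h'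
    · exact absurd h' hne
    · exact h'
  have hd : ∀ i ∈ t, 0 < d i := by
    intro i hi
    rcases eq_or_ne i 0 with rfl | hne
    · simpa [hddef] using hlam
    · have hai := hmemt i hi hne
      have h1 : 0 < -μ i := by linarith [hμi i hne]
      have h2 : 0 < ‖a i‖ := by simpa [norm_pos_iff] using hai
      simp only [hddef, if_neg hne]
      positivity
  -- the sum of z over t equals a 0 * x 0
  have hsumz : ∑ i ∈ t, z i = a 0 * x 0 := by
    have h1 : ∑ i ∈ t, z i = ∑ i, z i := by
      refine Finset.sum_subset (Finset.subset_univ _) fun i _ hi => ?_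
      have h2 : i ≠ 0 ∧ a i = 0 := by
        by_contra hc
        push_neg at hc
        refine hi (Finset.mem_filter.2 ⟨Finset.mem_univ _, ?_⟩)
        rcases eq_or_ne i 0 with rfl | hne
        · exact Or.inl rfl
        · exact Or.inr (hc hne)
      simp [hzdef, h2.1, h2.2]
    rw [h1]
    rw [← Finset.add_sum_erase _ z (Finset.mem_univ 0)]
    have h3 : ∑ i ∈ univ.erase 0, z i = -∑ i ∈ univ.erase 0, a i * x i := by
      rw [← Finset.sum_neg_distrib]
      refine Finset.sum_congr rfl fun i hi => ?_
      have hne : i ≠ 0 := Finset.ne_of_mem_erase hi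
      simp [hzdef, hne]
    rw [h3]
    have h4 : S = a 0 * x 0 + ∑ i ∈ univ.erase 0, a i * x i := by
      rw [hSdef, ← Finset.add_sum_erase _ (fun i => a i * x i) (Finset.mem_univ 0)]
    simp [hzdef, h4]
  -- Hölder bound
  have hoelder := hoelder_aux t z d hp hd
  rw [hsumz] at hoelder
  -- bound the first factor
  have hAle : ∑ i ∈ t, d i ^ (1 / (p - 1)) ≤ (μ 0) ^ (1 / (p - 1)) * ‖a 0‖ ^ q := by
    rw [← Finset.add_sum_erase _ (fun i => d i ^ (1 / (p - 1))) h0t]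
    have h1 : ∑ i ∈ t.erase 0, d i ^ (1 / (p - 1)) ≤
        ∑ i ∈ univ.erase 0, |μ i| ^ (1 / (p - 1)) * ‖a i‖ ^ q := by
      have hsub : t.erase 0 ⊆ univ.erase 0 :=
        Finset.erase_subset_erase _ (Finset.subset_univ _)
      refine le_trans (le_of_eq (Finset.sum_congr rfl fun i hi => ?_))
        (Finset.sum_le_sum_of_subset_of_nonneg hsub fun i _ _ => by positivity)
      have hne : i ≠ 0 := Finset.ne_of_mem_erase hi
      have h2 : 0 < -μ i := by linarith [hμi i hne]
      simp only [hddef, if_neg hne]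
      rw [Real.mul_rpow h2.le (by positivity),
        ← Real.rpow_mul (norm_nonneg _), abs_of_neg (hμi i hne)]
      congr 2
      rw [hq]; field_simp
    have h2 : d 0 ^ (1 / (p - 1)) = lam ^ (1 / (p - 1)) := by simp [hddef]
    rw [abs_of_pos hμ1] at h
    rw [h2]
    linarith
  have hApow : (∑ i ∈ t, d i ^ (1 / (p - 1))) ^ (p - 1) ≤ μ 0 * ‖a 0‖ ^ p := by
    have hAnn : (0:ℝ) ≤ ∑ i ∈ t, d i ^ (1 / (p - 1)) :=
      Finset.sum_nonneg fun i hi => Real.rpow_nonneg (hd i hi).le _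
    calc (∑ i ∈ t, d i ^ (1 / (p - 1))) ^ (p - 1)
        ≤ ((μ 0) ^ (1 / (p - 1)) * ‖a 0‖ ^ q) ^ (p - 1) :=
          Real.rpow_le_rpow hAnn hAle hp1.le
      _ = μ 0 * ‖a 0‖ ^ p := by
          rw [Real.mul_rpow (by positivity) (by positivity),
            ← Real.rpow_mul hμ1.le, ← Real.rpow_mul (norm_nonneg _),
            one_div_mul_cancel hp1.ne', Real.rpow_one, hqp]
  -- bound the second factor
  have hBle : ∑ i ∈ t, ‖z i‖ ^ p / d i ≤
      ‖S‖ ^ p / lam + ∑ i ∈ univ.erase 0, ‖x i‖ ^ p / (-μ i) := by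
    rw [← Finset.add_sum_erase _ (fun i => ‖z i‖ ^ p / d i) h0t]
    have h1 : ‖z 0‖ ^ p / d 0 = ‖S‖ ^ p / lam := by
      simp [hzdef, hddef]
    rw [h1]
    refine add_le_add le_rfl ?_
    have hsub : t.erase 0 ⊆ univ.erase 0 :=
      Finset.erase_subset_erase _ (Finset.subset_univ _)
    refine le_trans (le_of_eq (Finset.sum_congr rfl fun i hi => ?_))
      (Finset.sum_le_sum_of_subset_of_nonneg hsub fun i hi _ => ?_)
    · have hne : i ≠ 0 := Finset.ne_of_mem_erase hi
      have hai := hmemt i (Finset.mem_of_mem_erase hi) hne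
      have h2 : 0 < -μ i := by linarith [hμi i hne]
      have h3 : 0 < ‖a i‖ := by simpa [norm_pos_iff] using hai
      simp only [hzdef, hddef, if_neg hne]
      rw [norm_neg, norm_mul, Real.mul_rpow (norm_nonneg _) (norm_nonneg _)]
      rw [div_eq_div_iff (by positivity) (by positivity)]
      ring
    · have hne : i ≠ 0 := Finset.ne_of_mem_erase hi
      have h2 : 0 < -μ i := by linarith [hμi i hne]
      positivity
  -- combine
  have hBnn : (0:ℝ) ≤ ∑ i ∈ t, ‖z i‖ ^ p / d i :=
    Finset.sum_nonneg fun i hi => div_nonneg (by positivity) (hd i hi).le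
  have hkey : ‖a 0‖ ^ p * ‖x 0‖ ^ p ≤
      μ 0 * ‖a 0‖ ^ p *
        (‖S‖ ^ p / lam + ∑ i ∈ univ.erase 0, ‖x i‖ ^ p / (-μ i)) := by
    have h1 : ‖a 0 * x 0‖ ^ p =
        ‖a 0‖ ^ p * ‖x 0‖ ^ p := by
      rw [norm_mul, Real.mul_rpow (norm_nonneg _) (norm_nonneg _)]
    calc ‖a 0‖ ^ p * ‖x 0‖ ^ p
        = ‖a 0 * x 0‖ ^ p := h1.symm
      _ ≤ (∑ i ∈ t, d i ^ (1 / (p - 1))) ^ (p - 1) * ∑ i ∈ t, ‖z i‖ ^ p / d i :=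
          hoelder
      _ ≤ μ 0 * ‖a 0‖ ^ p *
            (‖S‖ ^ p / lam + ∑ i ∈ univ.erase 0, ‖x i‖ ^ p / (-μ i)) := by
          refine mul_le_mul hApow hBle hBnn (by positivity)
  have hdiv : ‖x 0‖ ^ p / μ 0 ≤
      ‖S‖ ^ p / lam + ∑ i ∈ univ.erase 0, ‖x i‖ ^ p / (-μ i) := by
    have hap : (0:ℝ) < ‖a 0‖ ^ p := Real.rpow_pos_of_pos ha0' _
    rw [div_le_iff₀ hμ1]
    nlinarith [hkey]
  -- finish
  rw [← Finset.add_sum_erase _ (fun i => ‖x i‖ ^ p / μ i) (Finset.mem_univ 0)]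
  have h5 : ∑ i ∈ univ.erase 0, ‖x i‖ ^ p / μ i =
      -∑ i ∈ univ.erase 0, ‖x i‖ ^ p / (-μ i) := by
    rw [← Finset.sum_neg_distrib]
    refine Finset.sum_congr rfl fun i hi => ?_
    rw [div_neg, neg_neg]
  rw [h5]
  linarith [hdiv]
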